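/- arXiv:2005.01554 — 5 statements merged into one kernel-verified Lean document; each statement's English description precedes it below -/
import Mathlib

section
/- Mass conservation for the one-step finite-volume scheme: if (c, μ) is a solution of the one-step scheme with previous volume fractions c⁰, then for each phase i ∈ {1,2} one has Σ_{K ∈ V} m_K c_{i,K} = Σ_{K ∈ V} m_K c⁰_{i,K}. -/
open Finset

/-- Logarithmic-mean edge value: `lm a b = a` if `a = b ≥ 0`, `0` if `min a b ≤ 0`,
and `(a - b)/(log a - log b)` otherwise. -/
noncomputable def lm (a b : ℝ) : ℝ :=
  if a = b ∧ 0 ≤ a then a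
  else if min a b ≤ 0 then 0
  else (a - b) / (Real.log a - Real.log b)

/-- Entropy function `H(c) = c log c - c + 1` (note `H 0 = 1` since `Real.log 0 = 0`). -/
noncomputable def ent (c : ℝ) : ℝ := c * Real.log c - c + 1

/-- Sum of `f L` over the neighbours `L` of `K`, i.e. over the `L` with `(K, L) ∈ E`. -/
noncomputable def nbrSum {V : Type*} [Fintype V] [DecidableEq V]
    (E : Finset (V × V)) (K : V) (f : V → ℝ) : ℝ :=
  ∑ L ∈ Finset.univ.filter (fun L => (K, L) ∈ E), f L

/-- Sum of a symmetric quantity `f K L` over the unordered edges `{K, L}`, where the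
edge set `E` is recorded as a symmetric finset of ordered pairs: each unordered edge
appears as both `(K, L)` and `(L, K)`, whence the division by `2`. -/
noncomputable def edgeSum {V : Type*} (E : Finset (V × V)) (f : V → V → ℝ) : ℝ :=
  (∑ p ∈ E, f p.1 p.2) / 2

/-- The one-step finite-volume scheme: equations (i) for both phases, (ii), (iii), (iv). -/
def OneStepScheme {V : Type*} [Fintype V] [DecidableEq V]
    (E : Finset (V × V)) (m : V → ℝ) (τ : V → V → ℝ)
    (Δt α κ η₁ η₂ θ₁ θ₂ : ℝ) (Ψ₁ Ψ₂ : V → ℝ)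
    (c₁₀ c₂₀ c₁ c₂ μ₁ μ₂ : V → ℝ) : Prop :=
  (∀ K : V,
    m K * (c₁ K - c₁₀ K) / Δt
      + nbrSum E K (fun L =>
          τ K L * (lm (c₁ K) (c₁ L) / η₁ * (μ₁ K + Ψ₁ K - μ₁ L - Ψ₁ L)
            + θ₁ * (c₁ K - c₁ L))) = 0) ∧
  (∀ K : V,
    m K * (c₂ K - c₂₀ K) / Δt
      + nbrSum E K (fun L =>
          τ K L * (lm (c₂ K) (c₂ L) / η₂ * (μ₂ K + Ψ₂ K - μ₂ L - Ψ₂ L)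
            + θ₂ * (c₂ K - c₂ L))) = 0) ∧
  (∀ K : V,
    μ₁ K - μ₂ K
      = α / m K * nbrSum E K (fun L => τ K L * (c₁ K - c₁ L))
        + κ * (1 - 2 * c₁₀ K)) ∧
  (∀ K : V, c₁ K + c₂ K = 1) ∧
  (∑ K : V, m K * (c₁ K * μ₁ K + c₂ K * μ₂ K) = 0)

/-- The discrete energy `𝔈(c)`. -/
noncomputable def discreteEnergy {V : Type*} [Fintype V]
    (E : Finset (V × V)) (m : V → ℝ) (τ : V → V → ℝ)
    (α κ η₁ η₂ θ₁ θ₂ : ℝ) (Ψ₁ Ψ₂ : V → ℝ) (c₁ c₂ : V → ℝ) : ℝ :=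
  α / 2 * edgeSum E (fun K L => τ K L * (c₁ K - c₁ L) ^ 2)
    + ∑ K : V, m K * (κ * c₁ K * c₂ K
        + (c₁ K * Ψ₁ K + θ₁ * η₁ * ent (c₁ K))
        + (c₂ K * Ψ₂ K + θ₂ * η₂ * ent (c₂ K)))

/-- The discrete dissipation `𝔇(c, μ)`. -/
noncomputable def discreteDissipation {V : Type*}
    (E : Finset (V × V)) (τ : V → V → ℝ)
    (η₁ η₂ θ₁ θ₂ : ℝ) (Ψ₁ Ψ₂ : V → ℝ) (c₁ c₂ μ₁ μ₂ : V → ℝ) : ℝ :=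
  edgeSum E (fun K L => τ K L * (lm (c₁ K) (c₁ L) / η₁)
      * (μ₁ K + Ψ₁ K + θ₁ * η₁ * Real.log (c₁ K)
          - μ₁ L - Ψ₁ L - θ₁ * η₁ * Real.log (c₁ L)) ^ 2)
  + edgeSum E (fun K L => τ K L * (lm (c₂ K) (c₂ L) / η₂)
      * (μ₂ K + Ψ₂ K + θ₂ * η₂ * Real.log (c₂ K)
          - μ₂ L - Ψ₂ L - θ₂ * η₂ * Real.log (c₂ L)) ^ 2)

lemma lm_comm (a b : ℝ) : lm a b = lm b a := by
  unfold lm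
  rcases eq_or_ne a b with h | h
  · subst h; rfl
  · simp only [h, h.symm, false_and, if_false, min_comm b a]
    split_ifs with h1
    · rfl
    · rw [← neg_sub a b, ← neg_sub (Real.log a), neg_div_neg_eq]

lemma sum_nbrSum {V : Type*} [Fintype V] [DecidableEq V]
    (E : Finset (V × V)) (F : V → V → ℝ) :
    ∑ K : V, nbrSum E K (fun L => F K L) = ∑ p ∈ E, F p.1 p.2 := by
  unfold nbrSum
  simp only [Finset.sum_filter]
  rw [← Finset.sum_product', Finset.univ_product_univ, ← Finset.sum_filter]
  congr 1
  ext p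
  simp

lemma sum_antisym {V : Type*} [Fintype V] [DecidableEq V]
    (E : Finset (V × V)) (F : V → V → ℝ)
    (hEirr : ∀ K : V, (K, K) ∉ E)
    (hEsym : ∀ K L : V, (K, L) ∈ E ↔ (L, K) ∈ E)
    (hanti : ∀ K L, F L K = - F K L) :
    ∑ K : V, nbrSum E K (fun L => F K L) = 0 := by
  rw [sum_nbrSum]
  apply Finset.sum_involution (fun p _ => p.swap)
  · intro p _
    show F p.1 p.2 + F p.2 p.1 = 0
    rw [hanti p.1 p.2]; ring
  · intro p hp _
    intro hc
    have h1 : p.2 = p.1 := congrArg Prod.fst hc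
    have hpe : (p.1, p.1) = p := Prod.ext rfl h1.symm
    exact hEirr p.1 (hpe ▸ hp)
  · intro p _
    rfl
  · intro p hp
    exact (hEsym p.1 p.2).mp (by simpa using hp)

/-- Mass conservation for the one-step finite-volume scheme. -/
theorem mass_conservation_one_step
    {V : Type*} [Fintype V] [DecidableEq V] [Nonempty V]
    (E : Finset (V × V)) (m : V → ℝ) (τ : V → V → ℝ)
    (Δt α κ η₁ η₂ θ₁ θ₂ : ℝ) (Ψ₁ Ψ₂ : V → ℝ)
    (c₁₀ c₂₀ c₁ c₂ μ₁ μ₂ : V → ℝ)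
    (hEirr : ∀ K : V, (K, K) ∉ E)
    (hEsym : ∀ K L : V, (K, L) ∈ E ↔ (L, K) ∈ E)
    (hconn : (SimpleGraph.fromRel (fun K L : V => (K, L) ∈ E)).Connected)
    (hm : ∀ K, 0 < m K)
    (hτpos : ∀ K L, (K, L) ∈ E → 0 < τ K L)
    (hτsym : ∀ K L, τ K L = τ L K)
    (hΔt : 0 < Δt) (hα : 0 < α) (hκ : 0 < κ)
    (hη₁ : 0 < η₁) (hη₂ : 0 < η₂) (hθ₁ : 0 < θ₁) (hθ₂ : 0 < θ₂)
    (hc₁₀ : ∀ K, c₁₀ K ∈ Set.Icc (0:ℝ) 1)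
    (hc₂₀ : ∀ K, c₂₀ K ∈ Set.Icc (0:ℝ) 1)
    (hc₀sum : ∀ K, c₁₀ K + c₂₀ K = 1)
    (hsol : OneStepScheme E m τ Δt α κ η₁ η₂ θ₁ θ₂ Ψ₁ Ψ₂ c₁₀ c₂₀ c₁ c₂ μ₁ μ₂)
    :
    (∑ K : V, m K * c₁ K = ∑ K : V, m K * c₁₀ K) ∧
    (∑ K : V, m K * c₂ K = ∑ K : V, m K * c₂₀ K) := by
  
  obtain ⟨h1, h2, _, _, _⟩ := hsol
  have key : ∀ (η θ : ℝ) (c c₀ μ Ψ : V → ℝ),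
      (∀ K : V, m K * (c K - c₀ K) / Δt
        + nbrSum E K (fun L =>
            τ K L * (lm (c K) (c L) / η * (μ K + Ψ K - μ L - Ψ L)
              + θ * (c K - c L))) = 0) →
      ∑ K : V, m K * c K = ∑ K : V, m K * c₀ K := by
    intro η θ c c₀ μ Ψ heq
    have hz : ∑ K : V, nbrSum E K (fun L =>
        τ K L * (lm (c K) (c L) / η * (μ K + Ψ K - μ L - Ψ L)
          + θ * (c K - c L))) = 0 := by
      apply sum_antisym E _ hEirr hEsym
      intro K L
      rw [hτsym L K, lm_comm (c L) (c K)]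
      ring
    have hsum : ∑ K : V, m K * (c K - c₀ K) / Δt = 0 := by
      have := Finset.sum_congr rfl (fun K (_ : K ∈ Finset.univ) => heq K)
      rw [Finset.sum_add_distrib, hz, add_zero] at this
      simpa using this
    have h0 : ∑ K : V, m K * (c K - c₀ K) = 0 := by
      have : (∑ K : V, m K * (c K - c₀ K)) / Δt = 0 := by
        rw [Finset.sum_div]; exact hsum
      exact (div_eq_zero_iff.mp this).resolve_right hΔt.ne'
    have h0' : ∑ K : V, (m K * c K - m K * c₀ K) = 0 := by
      simpa [mul_sub] using h0
    rw [Finset.sum_sub_distrib] at h0'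
    linarith
  exact ⟨key η₁ θ₁ c₁ c₁₀ μ₁ Ψ₁ h1, key η₂ θ₂ c₂ c₂₀ μ₂ Ψ₂ h2⟩
end

section
/- Positivity for the one-step finite-volume scheme: if moreover Σ_{K ∈ V} m_K c⁰_{i,K} > 0 for both i = 1 and i = 2, then any solution (c, μ) of the one-step scheme satisfies 0 < c_{i,K} < 1 for every K ∈ V and every i ∈ {1,2}. -/
open Finset

lemma lm_eq_zero_of_nonpos {a : ℝ} (b : ℝ) (ha : a ≤ 0) : lm a b = 0 := by
  unfold lm
  split_ifs with h1 h2
  · exact le_antisymm ha h1.2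
  · rfl
  · exact absurd (le_trans (min_le_left a b) ha) h2

lemma pos_aux {V : Type*} [Fintype V] [DecidableEq V] [Nonempty V]
    (E : Finset (V × V)) (m : V → ℝ) (τ : V → V → ℝ)
    (Δt θ η : ℝ) (Ψ c₀ c μ : V → ℝ)
    (hEsym : ∀ K L : V, (K, L) ∈ E ↔ (L, K) ∈ E)
    (hconn : (SimpleGraph.fromRel (fun K L : V => (K, L) ∈ E)).Connected)
    (hm : ∀ K, 0 < m K)
    (hτpos : ∀ K L, (K, L) ∈ E → 0 < τ K L)
    (hΔt : 0 < Δt) (hθ : 0 < θ)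
    (hc₀ : ∀ K, 0 ≤ c₀ K)
    (heq : ∀ K, m K * (c K - c₀ K) / Δt
      + nbrSum E K (fun L => τ K L * (lm (c K) (c L) / η * (μ K + Ψ K - μ L - Ψ L)
            + θ * (c K - c L))) = 0)
    (hmass : 0 < ∑ K : V, m K * c₀ K) :
    ∀ K, 0 < c K := by
  by_contra hcon
  push_neg at hcon
  obtain ⟨K₀, hK₀⟩ := hcon
  obtain ⟨Km, -, hKm⟩ := Finset.exists_min_image Finset.univ c
    ⟨Classical.arbitrary V, Finset.mem_univ _⟩
  set minv := c Km with hminvdef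
  have hminv : minv ≤ 0 := le_trans (hKm K₀ (Finset.mem_univ _)) hK₀
  have step : ∀ K, c K = minv → (c K = c₀ K ∧ ∀ L, (K, L) ∈ E → c L = minv) := by
    intro K hK
    have hKle : c K ≤ 0 := hK ▸ hminv
    have he := heq K
    have hrw : nbrSum E K (fun L => τ K L * (lm (c K) (c L) / η * (μ K + Ψ K - μ L - Ψ L)
            + θ * (c K - c L)))
        = nbrSum E K (fun L => τ K L * (θ * (c K - c L))) := by
      unfold nbrSum
      refine Finset.sum_congr rfl fun L _ => ?_
      show τ K L * (lm (c K) (c L) / η * (μ K + Ψ K - μ L - Ψ L) + θ * (c K - c L))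
        = τ K L * (θ * (c K - c L))
      rw [lm_eq_zero_of_nonpos (c L) hKle]; ring
    rw [hrw] at he
    have hterms : ∀ L ∈ Finset.univ.filter (fun L => (K, L) ∈ E),
        τ K L * (θ * (c K - c L)) ≤ 0 := by
      intro L hL
      have hLE : (K, L) ∈ E := (Finset.mem_filter.mp hL).2
      have hcl : c K - c L ≤ 0 := by
        have := hKm L (Finset.mem_univ _)
        rw [hK]; linarith
      have hτn := hτpos K L hLE
      have h2 : θ * (c K - c L) ≤ 0 := mul_nonpos_iff.mpr (Or.inl ⟨hθ.le, hcl⟩)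
      exact mul_nonpos_iff.mpr (Or.inl ⟨hτn.le, h2⟩)
    have hS : nbrSum E K (fun L => τ K L * (θ * (c K - c L))) ≤ 0 :=
      Finset.sum_nonpos hterms
    have hA : m K * (c K - c₀ K) / Δt ≤ 0 := by
      apply div_nonpos_of_nonpos_of_nonneg _ hΔt.le
      have h1 : c K - c₀ K ≤ 0 := by
        have := hc₀ K; linarith
      nlinarith [hm K]
    have hA0 : m K * (c K - c₀ K) / Δt = 0 := by linarith
    have hS0 : nbrSum E K (fun L => τ K L * (θ * (c K - c L))) = 0 := by linarith
    constructor
    · have h1 : m K * (c K - c₀ K) = 0 := by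
        rcases div_eq_zero_iff.mp hA0 with h | h
        · exact h
        · exact absurd h hΔt.ne'
      rcases mul_eq_zero.mp h1 with h | h
      · exact absurd h (hm K).ne'
      · linarith
    · intro L hL
      have h0 := (Finset.sum_eq_zero_iff_of_nonpos hterms).mp hS0 L
        (Finset.mem_filter.mpr ⟨Finset.mem_univ _, hL⟩)
      have hτ := hτpos K L hL
      have : c K - c L = 0 := by
        rcases mul_eq_zero.mp h0 with h | h
        · exact absurd h hτ.ne'
        · rcases mul_eq_zero.mp h with h | h
          · exact absurd h hθ.ne'
          · exact h
      rw [← hK]; linarith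
  have walkprop : ∀ u v : V,
      (SimpleGraph.fromRel (fun K L : V => (K, L) ∈ E)).Walk u v →
      c u = minv → c v = minv := by
    intro u v w
    induction w with
    | nil => exact id
    | @cons a b d hab p ih =>
      intro ha
      apply ih
      rw [SimpleGraph.fromRel_adj] at hab
      rcases hab.2 with h | h
      · exact (step a ha).2 b h
      · exact (step a ha).2 b ((hEsym a b).mpr h)
  have hall : ∀ K, c K = minv := fun K =>
    (hconn.preconnected Km K).elim fun w => walkprop Km K w rfl
  have hsum : ∑ K : V, m K * c₀ K ≤ 0 := by
    apply Finset.sum_nonpos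
    intro K _
    have h1 : c₀ K = minv := by
      have := (step K (hall K)).1
      rw [← this, hall K]
    rw [h1]
    nlinarith [hm K]
  linarith

/-- Positivity for the one-step finite-volume scheme. -/
theorem positivity_one_step
    {V : Type*} [Fintype V] [DecidableEq V] [Nonempty V]
    (E : Finset (V × V)) (m : V → ℝ) (τ : V → V → ℝ)
    (Δt α κ η₁ η₂ θ₁ θ₂ : ℝ) (Ψ₁ Ψ₂ : V → ℝ)
    (c₁₀ c₂₀ c₁ c₂ μ₁ μ₂ : V → ℝ)
    (hEirr : ∀ K : V, (K, K) ∉ E)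
    (hEsym : ∀ K L : V, (K, L) ∈ E ↔ (L, K) ∈ E)
    (hconn : (SimpleGraph.fromRel (fun K L : V => (K, L) ∈ E)).Connected)
    (hm : ∀ K, 0 < m K)
    (hτpos : ∀ K L, (K, L) ∈ E → 0 < τ K L)
    (hτsym : ∀ K L, τ K L = τ L K)
    (hΔt : 0 < Δt) (hα : 0 < α) (hκ : 0 < κ)
    (hη₁ : 0 < η₁) (hη₂ : 0 < η₂) (hθ₁ : 0 < θ₁) (hθ₂ : 0 < θ₂)
    (hc₁₀ : ∀ K, c₁₀ K ∈ Set.Icc (0:ℝ) 1)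
    (hc₂₀ : ∀ K, c₂₀ K ∈ Set.Icc (0:ℝ) 1)
    (hc₀sum : ∀ K, c₁₀ K + c₂₀ K = 1)
    (hsol : OneStepScheme E m τ Δt α κ η₁ η₂ θ₁ θ₂ Ψ₁ Ψ₂ c₁₀ c₂₀ c₁ c₂ μ₁ μ₂)
    (hmass₁ : 0 < ∑ K : V, m K * c₁₀ K)
    (hmass₂ : 0 < ∑ K : V, m K * c₂₀ K) :
    ∀ K : V, (0 < c₁ K ∧ c₁ K < 1) ∧ (0 < c₂ K ∧ c₂ K < 1) := by
  obtain ⟨heq₁, heq₂, -, hsum, -⟩ := hsol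
  have hpos₁ : ∀ K, 0 < c₁ K :=
    pos_aux E m τ Δt θ₁ η₁ Ψ₁ c₁₀ c₁ μ₁ hEsym hconn hm hτpos hΔt hθ₁
      (fun K => (hc₁₀ K).1) heq₁ hmass₁
  have hpos₂ : ∀ K, 0 < c₂ K :=
    pos_aux E m τ Δt θ₂ η₂ Ψ₂ c₂₀ c₂ μ₂ hEsym hconn hm hτpos hΔt hθ₂
      (fun K => (hc₂₀ K).1) heq₂ hmass₂
  intro K
  have h := hsum K
  exact ⟨⟨hpos₁ K, by linarith [hpos₂ K]⟩, ⟨hpos₂ K, by linarith [hpos₁ K]⟩⟩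
end

section
/- Edge oscillation bound under an inverse CFL condition: suppose c : V → [0,1] satisfies, for every K ∈ V, ( Σ_{L : {K,L} ∈ E} τ_{KL} (c_K − c_L) )² ≤ C m_K / Δt, and suppose the inverse CFL condition Δt / m_K ≥ γ C / τ⋆² holds for every K ∈ V. Then |c_K − c_L| ≤ 1 − δ for every edge {K,L} ∈ E, where δ := min{ τ⋆ / ((ℓ⋆ − 1) τ* + τ⋆), τ⋆ (1 − 1/√γ) / ((ℓ⋆ − 1) τ* + τ⋆) } ∈ (0,1). -/
open Finset

/-- Edge oscillation bound under an inverse CFL condition.  The edge set `E` is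
recorded as a symmetric finset of ordered pairs of distinct cells; `τstar` is the lower
bound `τ⋆`, `τstarU` the upper bound `τ*`, and `ℓstar` the maximal number of edges per cell. -/
theorem edge_oscillation_inverse_CFL
    {V : Type*} [Fintype V] [DecidableEq V] [Nonempty V]
    (E : Finset (V × V)) (m : V → ℝ) (τ : V → V → ℝ)
    (Δt C γ τstar τstarU : ℝ) (ℓstar : ℕ)
    (hEirr : ∀ K : V, (K, K) ∉ E)
    (hEsym : ∀ K L : V, (K, L) ∈ E ↔ (L, K) ∈ E)
    (hm : ∀ K, 0 < m K)
    (hτsym : ∀ K L, τ K L = τ L K)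
    (hτstar : 0 < τstar) (hττ : τstar ≤ τstarU)
    (hτbounds : ∀ K L, (K, L) ∈ E → τstar ≤ τ K L ∧ τ K L ≤ τstarU)
    (hℓstar : 3 ≤ ℓstar)
    (hdeg : ∀ K : V, (Finset.univ.filter (fun L => (K, L) ∈ E)).card ≤ ℓstar)
    (hΔt : 0 < Δt) (hC : 0 < C) (hγ : 1 < γ)
    (c : V → ℝ) (hc : ∀ K, c K ∈ Set.Icc (0:ℝ) 1)
    (hosc : ∀ K : V, (nbrSum E K (fun L => τ K L * (c K - c L))) ^ 2 ≤ C * m K / Δt)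
    (hCFL : ∀ K : V, γ * C / τstar ^ 2 ≤ Δt / m K) :
    let δ : ℝ := min (τstar / (((ℓstar : ℝ) - 1) * τstarU + τstar))
      (τstar * (1 - 1 / Real.sqrt γ) / (((ℓstar : ℝ) - 1) * τstarU + τstar))
    0 < δ ∧ δ < 1 ∧ ∀ K L : V, (K, L) ∈ E → |c K - c L| ≤ 1 - δ := by
  intro δ
  have hℓ : (2:ℝ) ≤ (ℓstar:ℝ) - 1 := by
    have h3 : (3:ℝ) ≤ (ℓstar:ℝ) := by exact_mod_cast hℓstar
    linarith
  have hD : 0 < ((ℓstar : ℝ) - 1) * τstarU + τstar := by nlinarith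
  have hsγ : 1 < Real.sqrt γ := by
    have := Real.sqrt_lt_sqrt (by norm_num : (0:ℝ) ≤ 1) hγ
    simpa using this
  have hsγ0 : 0 < Real.sqrt γ := by linarith
  have hfrac : 0 < 1 - 1 / Real.sqrt γ := by
    have : 1 / Real.sqrt γ < 1 := by rw [div_lt_one hsγ0]; exact hsγ
    linarith
  have hδpos : 0 < δ := lt_min (div_pos hτstar hD) (div_pos (mul_pos hτstar hfrac) hD)
  have hδ1 : δ < 1 := by
    have h1 : τstar / (((ℓstar:ℝ) - 1) * τstarU + τstar) < 1 := by
      rw [div_lt_one hD]; nlinarith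
    exact lt_of_le_of_lt (min_le_left _ _) h1
  refine ⟨hδpos, hδ1, ?_⟩
  have key : ∀ K L : V, (K, L) ∈ E → c K - c L ≤ 1 - δ := by
    intro K L₀ hKL
    by_contra hcon
    push_neg at hcon
    set S := Finset.univ.filter (fun L => (K, L) ∈ E) with hS
    have hL₀S : L₀ ∈ S := by simp [hS, hKL]
    -- upper bound on the flux sum
    have hsum_ub : nbrSum E K (fun L => τ K L * (c K - c L)) ≤ τstar / Real.sqrt γ := by
      set s := nbrSum E K (fun L => τ K L * (c K - c L)) with hs
      have h1 : s ^ 2 ≤ C * m K / Δt := hosc K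
      have h2 : C * m K / Δt ≤ τstar ^ 2 / γ := by
        have hK := hCFL K
        rw [div_le_div_iff₀ (pow_pos hτstar 2) (hm K)] at hK
        rw [div_le_div_iff₀ hΔt (by positivity)]
        nlinarith [hm K]
      have h3 : s ≤ Real.sqrt (τstar ^ 2 / γ) := by
        calc s ≤ |s| := le_abs_self s
          _ = Real.sqrt (s ^ 2) := (Real.sqrt_sq_eq_abs s).symm
          _ ≤ _ := Real.sqrt_le_sqrt (le_trans h1 h2)
      rwa [Real.sqrt_div' _ (by positivity), Real.sqrt_sq hτstar.le] at h3
    -- lower bound on the flux sum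
    have hcK1 : 1 - δ < c K := by
      have h0 := (hc L₀).1
      linarith
    have hterm : ∀ L ∈ S.erase L₀, -(τstarU * δ) ≤ τ K L * (c K - c L) := by
      intro L hL
      have hLS : L ∈ S := Finset.mem_of_mem_erase hL
      have hLE : (K, L) ∈ E := by simpa [hS] using hLS
      obtain ⟨hτl, hτu⟩ := hτbounds K L hLE
      have hcL : c L ≤ 1 := (hc L).2
      have hx : -δ ≤ c K - c L := by linarith
      rcases le_or_gt 0 (c K - c L) with h | h
      · nlinarith
      · nlinarith
    have hcard : ((S.erase L₀).card : ℝ) ≤ (ℓstar : ℝ) - 1 := by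
      have hd : S.card ≤ ℓstar := by rw [hS]; exact hdeg K
      have hcm : (S.erase L₀).card = S.card - 1 := Finset.card_erase_of_mem hL₀S
      have h1 : 1 ≤ S.card := Finset.card_pos.mpr ⟨L₀, hL₀S⟩
      have : (S.erase L₀).card ≤ ℓstar - 1 := by omega
      have hℓ1 : 1 ≤ ℓstar := by omega
      calc ((S.erase L₀).card : ℝ) ≤ ((ℓstar - 1 : ℕ) : ℝ) := by exact_mod_cast this
        _ = (ℓstar : ℝ) - 1 := by
            push_cast [Nat.cast_sub hℓ1]
            ring
    have hrest : ((ℓstar : ℝ) - 1) * (-(τstarU * δ)) ≤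
        ∑ L ∈ S.erase L₀, τ K L * (c K - c L) := by
      have h1 : ((S.erase L₀).card) • (-(τstarU * δ)) ≤
          ∑ L ∈ S.erase L₀, τ K L * (c K - c L) :=
        Finset.card_nsmul_le_sum _ _ _ hterm
      have hneg : -(τstarU * δ) ≤ 0 := by nlinarith
      have h2 : ((ℓstar : ℝ) - 1) * (-(τstarU * δ)) ≤
          ((S.erase L₀).card : ℝ) * (-(τstarU * δ)) := by
        exact mul_le_mul_of_nonpos_right hcard hneg
      calc ((ℓstar : ℝ) - 1) * (-(τstarU * δ)) ≤
          ((S.erase L₀).card : ℝ) * (-(τstarU * δ)) := h2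
        _ = ((S.erase L₀).card) • (-(τstarU * δ)) := by rw [nsmul_eq_mul]
        _ ≤ _ := h1
    have hsplit : nbrSum E K (fun L => τ K L * (c K - c L)) =
        τ K L₀ * (c K - c L₀) + ∑ L ∈ S.erase L₀, τ K L * (c K - c L) := by
      rw [nbrSum, ← hS, ← Finset.add_sum_erase S _ hL₀S]
    obtain ⟨hτl₀, hτu₀⟩ := hτbounds K L₀ hKL
    have hfirst : τstar * (1 - δ) < τ K L₀ * (c K - c L₀) := by nlinarith
    -- δ * D ≤ τstar * (1 - 1/√γ)
    have hδ2 : δ * (((ℓstar : ℝ) - 1) * τstarU + τstar) ≤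
        τstar * (1 - 1 / Real.sqrt γ) := by
      have hδle : δ ≤ τstar * (1 - 1 / Real.sqrt γ) / (((ℓstar : ℝ) - 1) * τstarU + τstar) :=
        min_le_right _ _
      rw [← le_div_iff₀ hD]
      exact hδle
    have hfin : τstar / Real.sqrt γ ≤ τstar - δ * (((ℓstar : ℝ) - 1) * τstarU + τstar) := by
      have he : τstar - τstar * (1 - 1 / Real.sqrt γ) = τstar / Real.sqrt γ := by ring
      linarith
    have hring : τstar * (1 - δ) + ((ℓstar : ℝ) - 1) * (-(τstarU * δ)) =
        τstar - δ * (((ℓstar : ℝ) - 1) * τstarU + τstar) := by ring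
    have hlast : τstar / Real.sqrt γ < nbrSum E K (fun L => τ K L * (c K - c L)) := by
      rw [hsplit]
      linarith
    linarith
  intro K L hKL
  rw [abs_sub_le_iff]
  exact ⟨key K L hKL, key L K ((hEsym K L).mp hKL)⟩
end

section
/- Uniform lower bound on the sum of logarithmic-mean edge values away from the degenerate corners: let φ(a,b) := lm(a,b) + lm(1 − a, 1 − b) for (a,b) ∈ [0,1]². Then for every δ ∈ (0,1) there exists c⋆ > 0 such that φ(a,b) ≥ c⋆ for all (a,b) ∈ [0,1]² with |a − b| ≤ 1 − δ. -/
private lemma lm_key (a b : ℝ) (hb : 0 < b) (hab : b < a) :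
    b ≤ (a - b) / (Real.log a - Real.log b) := by
  have ha : 0 < a := hb.trans hab
  have hlog : 0 < Real.log a - Real.log b := sub_pos.mpr (Real.log_lt_log hb hab)
  rw [le_div_iff₀ hlog]
  have h := Real.log_le_sub_one_of_pos (div_pos ha hb)
  rw [Real.log_div ha.ne' hb.ne'] at h
  have : b * (Real.log a - Real.log b) ≤ b * (a / b - 1) :=
    mul_le_mul_of_nonneg_left h hb.le
  have hdiv : b * (a / b - 1) = a - b := by field_simp
  linarith [hdiv ▸ this]

private lemma min_le_lm (a b : ℝ) (ha : 0 ≤ a) (hb : 0 ≤ b) : min a b ≤ lm a b := by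
  unfold lm
  split_ifs with h1 h2
  · simp [h1.1]
  · have : min a b = 0 := le_antisymm h2 (le_min ha hb)
    simp [this]
  · push_neg at h2
    rcases lt_trichotomy a b with h | h | h
    · have : min a b = a := min_eq_left h.le
      rw [this]
      have := lm_key b a (lt_of_lt_of_le h2 (min_le_left a b)) h
      have heq : (b - a) / (Real.log b - Real.log a) = (a - b) / (Real.log a - Real.log b) := by
        rw [div_eq_div_iff] <;> try ring
        · exact sub_ne_zero.mpr (ne_of_gt (Real.log_lt_log (lt_of_lt_of_le h2 (min_le_left a b)) h))
        · exact sub_ne_zero.mpr (ne_of_lt (Real.log_lt_log (lt_of_lt_of_le h2 (min_le_left a b)) h))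
      linarith [heq ▸ this]
    · exact absurd ⟨h, ha⟩ h1
    · have : min a b = b := min_eq_right h.le
      rw [this]
      exact lm_key a b (lt_of_lt_of_le h2 (min_le_right a b)) h

/-- Uniform lower bound on `φ(a,b) = lm(a,b) + lm(1-a,1-b)` away from the degenerate
corners of the unit square. -/
theorem lm_sum_uniform_lower_bound (δ : ℝ) (hδ0 : 0 < δ) (hδ1 : δ < 1) :
    ∃ cstar : ℝ, 0 < cstar ∧
      ∀ a b : ℝ, a ∈ Set.Icc (0:ℝ) 1 → b ∈ Set.Icc (0:ℝ) 1 → |a - b| ≤ 1 - δ →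
        cstar ≤ lm a b + lm (1 - a) (1 - b) := by
  refine ⟨δ, hδ0, fun a b ha hb hab => ?_⟩
  obtain ⟨ha0, ha1⟩ := ha
  obtain ⟨hb0, hb1⟩ := hb
  have h1 := min_le_lm a b ha0 hb0
  have h2 := min_le_lm (1 - a) (1 - b) (by linarith) (by linarith)
  rcases abs_le.mp hab with ⟨hl, hr⟩
  rcases le_total a b with h | h
  · rw [min_eq_left h] at h1
    rw [min_eq_right (by linarith : (1:ℝ) - b ≤ 1 - a)] at h2
    linarith
  · rw [min_eq_right h] at h1
    rw [min_eq_left (by linarith : (1:ℝ) - a ≤ 1 - b)] at h2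
    linarith
end

section
/- Range and vanishing set of the sum of logarithmic-mean edge values: let φ(a,b) := lm(a,b) + lm(1 − a, 1 − b) for (a,b) ∈ [0,1]². Then φ is continuous on [0,1]², satisfies 0 ≤ φ(a,b) ≤ 1 for all (a,b) ∈ [0,1]², and φ(a,b) = 0 if and only if (a,b) = (0,1) or (a,b) = (1,0). -/
lemma lm_self {x : ℝ} (hx : 0 ≤ x) : lm x x = x := by
  unfold lm; rw [if_pos ⟨rfl, hx⟩]

lemma lm_of_nonpos {x y : ℝ} (h : min x y ≤ 0) : lm x y = 0 := by
  unfold lm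
  split_ifs with h1
  · obtain ⟨rfl, h2⟩ := h1
    simpa using le_antisymm (by simpa using h) h2
  · rfl

lemma lm_eq_of_lt {x y : ℝ} (hx : 0 < x) (hxy : x < y) :
    lm x y = (y - x) / (Real.log y - Real.log x) := by
  unfold lm
  rw [if_neg (by rintro ⟨rfl, -⟩; exact lt_irrefl x hxy),
    if_neg (by simp [hx, lt_of_lt_of_le hx hxy.le] : ¬ min x y ≤ 0),
    show x - y = -(y - x) by ring, show Real.log x - Real.log y = -(Real.log y - Real.log x) by ring,
    neg_div_neg_eq]

lemma lm_eq_of_lt' {x y : ℝ} (hx : 0 < x) (hxy : x < y) :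
    lm y x = (y - x) / (Real.log y - Real.log x) := by
  unfold lm
  rw [if_neg (by rintro ⟨h, -⟩; exact absurd h hxy.ne'),
    if_neg (by simp [hx, lt_of_lt_of_le hx hxy.le] : ¬ min y x ≤ 0)]

lemma lm_comm_s9 (x y : ℝ) : lm x y = lm y x := by
  rcases lt_trichotomy x y with h | rfl | h
  · by_cases hx : 0 < x
    · rw [lm_eq_of_lt hx h, lm_eq_of_lt' hx h]
    · rw [lm_of_nonpos (min_le_left x y |>.trans (not_lt.1 hx)),
        lm_of_nonpos (min_le_right y x |>.trans (not_lt.1 hx))]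
  · rfl
  · by_cases hy : 0 < y
    · rw [lm_eq_of_lt hy h, lm_eq_of_lt' hy h]
    · rw [lm_of_nonpos (min_le_right x y |>.trans (not_lt.1 hy)),
        lm_of_nonpos (min_le_left y x |>.trans (not_lt.1 hy))]

lemma key_ineq {t : ℝ} (ht : 1 ≤ t) : 2 * (t - 1) ≤ (t + 1) * Real.log t := by
  set f : ℝ → ℝ := fun u => (u + 1) * Real.log u - 2 * (u - 1) with hf
  have hd : ∀ s : ℝ, 0 < s → HasDerivAt f (Real.log s + (s + 1) * s⁻¹ - 2) s := by
    intro s hs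
    have h1 : HasDerivAt (fun u : ℝ => (u + 1) * Real.log u)
        (1 * Real.log s + (s + 1) * s⁻¹) s :=
      ((hasDerivAt_id s).add_const 1).mul (Real.hasDerivAt_log hs.ne')
    have h2 : HasDerivAt (fun u : ℝ => 2 * (u - 1)) 2 s := by
      simpa using ((hasDerivAt_id s).sub_const 1).const_mul 2
    have h3 := h1.sub h2
    rw [one_mul] at h3
    exact h3
  have hmono : MonotoneOn f (Set.Ici 1) := by
    apply monotoneOn_of_deriv_nonneg (convex_Ici 1)
    · intro s hs
      have hs0 : (0:ℝ) < s := lt_of_lt_of_le one_pos hs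
      exact ((hd s hs0).continuousAt).continuousWithinAt
    · intro s hs
      rw [interior_Ici] at hs
      exact ((hd s (lt_trans one_pos hs)).differentiableAt).differentiableWithinAt
    · intro s hs
      rw [interior_Ici] at hs
      have hs0 : (0:ℝ) < s := lt_trans one_pos hs
      rw [(hd s hs0).deriv]
      have h3 : Real.log s⁻¹ ≤ s⁻¹ - 1 := Real.log_le_sub_one_of_pos (by positivity)
      rw [Real.log_inv] at h3
      have : (s + 1) * s⁻¹ = 1 + s⁻¹ := by field_simp
      linarith
  have h0 : f 1 ≤ f t := hmono (by norm_num) ht ht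
  simpa [hf] using h0

lemma lm_bounds {x y : ℝ} (hx : 0 < x) (hxy : x < y) :
    x ≤ lm x y ∧ lm x y ≤ y ∧ lm x y ≤ (x + y) / 2 := by
  have hy : 0 < y := lt_trans hx hxy
  have hd : 0 < Real.log y - Real.log x := sub_pos.2 (Real.log_lt_log hx hxy)
  have hlog : Real.log y - Real.log x = Real.log (y / x) := (Real.log_div hy.ne' hx.ne').symm
  rw [lm_eq_of_lt hx hxy]
  have h1 : Real.log (y / x) ≤ y / x - 1 := Real.log_le_sub_one_of_pos (by positivity)
  have h2 : Real.log (x / y) ≤ x / y - 1 := Real.log_le_sub_one_of_pos (by positivity)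
  have h2' : Real.log (x / y) = -(Real.log y - Real.log x) := by
    rw [Real.log_div hx.ne' hy.ne']; ring
  have h3 := key_ineq ((one_le_div hx).2 hxy.le)
  rw [← hlog] at h1 h3
  rw [h2'] at h2
  refine ⟨?_, ?_, ?_⟩
  · rw [le_div_iff₀ hd]
    have := mul_le_mul_of_nonneg_left h1 hx.le
    have e : x * (y / x - 1) = y - x := by field_simp
    linarith
  · rw [div_le_iff₀ hd]
    have := mul_le_mul_of_nonneg_left h2 hy.le
    have e : y * (x / y - 1) = x - y := by field_simp
    linarith
  · rw [div_le_iff₀ hd]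
    have := mul_le_mul_of_nonneg_left h3 hx.le
    have e1 : x * (2 * (y / x - 1)) = 2 * (y - x) := by field_simp
    have e3 : x * (y / x + 1) = x + y := by field_simp; ring
    have e2 : x * ((y / x + 1) * (Real.log y - Real.log x)) =
        (x + y) * (Real.log y - Real.log x) := by
      rw [show x * ((y / x + 1) * (Real.log y - Real.log x)) =
        (x * (y / x + 1)) * (Real.log y - Real.log x) from by ring, e3]
    linarith

lemma lm_nonneg {x y : ℝ} (hx : 0 ≤ x) (hy : 0 ≤ y) : 0 ≤ lm x y := by
  rcases lt_trichotomy x y with h | rfl | h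
  · rcases eq_or_lt_of_le hx with rfl | hx0
    · rw [lm_of_nonpos (by simp)]
    · linarith [(lm_bounds hx0 h).1]
  · rw [lm_self hx]; exact hx
  · rw [lm_comm_s9]
    rcases eq_or_lt_of_le hy with rfl | hy0
    · rw [lm_of_nonpos (by simp)]
    · linarith [(lm_bounds hy0 h).1]

lemma lm_le_avg {x y : ℝ} (hx : 0 ≤ x) (hy : 0 ≤ y) : lm x y ≤ (x + y) / 2 := by
  rcases lt_trichotomy x y with h | rfl | h
  · rcases eq_or_lt_of_le hx with rfl | hx0
    · rw [lm_of_nonpos (by simp)]; linarith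
    · exact (lm_bounds hx0 h).2.2
  · rw [lm_self hx]; linarith
  · rw [lm_comm_s9]
    rcases eq_or_lt_of_le hy with rfl | hy0
    · rw [lm_of_nonpos (by simp)]; linarith
    · linarith [(lm_bounds hy0 h).2.2]

lemma lm_le_max {x y : ℝ} (hx : 0 ≤ x) (hy : 0 ≤ y) : lm x y ≤ max x y := by
  rcases lt_trichotomy x y with h | rfl | h
  · rcases eq_or_lt_of_le hx with rfl | hx0
    · rw [lm_of_nonpos (by simp)]; exact le_max_of_le_left le_rfl
    · exact ((lm_bounds hx0 h).2.1).trans (le_max_right x y)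
  · rw [lm_self hx]; exact le_max_left x x
  · rw [lm_comm_s9]
    rcases eq_or_lt_of_le hy with rfl | hy0
    · rw [lm_of_nonpos (by simp)]; exact le_max_of_le_right le_rfl
    · exact ((lm_bounds hy0 h).2.1).trans (le_max_left x y)

lemma min_le_lm_s9 {x y : ℝ} (hx : 0 < x) (hy : 0 < y) : min x y ≤ lm x y := by
  rcases lt_trichotomy x y with h | rfl | h
  · exact (min_le_left x y).trans (lm_bounds hx h).1
  · rw [lm_self hx.le]; exact min_le_left x x
  · rw [lm_comm_s9]
    exact (min_le_right x y).trans (lm_bounds hy h).1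

lemma lm_pos {x y : ℝ} (hx : 0 < x) (hy : 0 < y) : 0 < lm x y :=
  lt_of_lt_of_le (lt_min hx hy) (min_le_lm_s9 hx hy)

lemma lm_eq_zero_iff {x y : ℝ} (hx : 0 ≤ x) (hy : 0 ≤ y) :
    (lm x y = 0 ↔ x = 0 ∨ y = 0) := by
  constructor
  · intro h
    by_contra hc
    push_neg at hc
    exact absurd h (lm_pos (hx.lt_of_ne (Ne.symm hc.1)) (hy.lt_of_ne (Ne.symm hc.2))).ne'
  · rintro (rfl | rfl)
    · exact lm_of_nonpos (by simp)
    · exact lm_of_nonpos (by simp)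

/-- key smallness estimate for continuity at the boundary x = 0 -/
lemma lm_small {x y ε : ℝ} (hx : 0 ≤ x) (hy : 0 ≤ y) (hy1 : y ≤ 1) (hε : 0 < ε)
    (h : x < min ε (ε * Real.exp (-(1/ε)))) : lm x y < ε := by
  rcases eq_or_lt_of_le hx with rfl | hx0
  · rw [lm_of_nonpos (by simp)]; exact hε
  rcases eq_or_lt_of_le hy with rfl | hy0
  · rw [lm_of_nonpos (by simp)]; exact hε
  rcases lt_trichotomy x y with hlt | rfl | hgt
  · -- 0 < x < y
    by_cases hyε : y ≤ ε
    · calc lm x y ≤ (x + y) / 2 := lm_le_avg hx hy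
        _ < y := by linarith
        _ ≤ ε := hyε
    · push_neg at hyε
      have hxs : x < ε * Real.exp (-(1/ε)) := lt_of_lt_of_le h (min_le_right _ _)
      have hlx : Real.log x < Real.log ε - 1/ε := by
        calc Real.log x < Real.log (ε * Real.exp (-(1/ε))) := Real.log_lt_log hx0 hxs
          _ = Real.log ε - 1/ε := by rw [Real.log_mul hε.ne' (Real.exp_pos _).ne', Real.log_exp]; ring
      have hly : Real.log ε < Real.log y := Real.log_lt_log hε hyε
      have hden : 1/ε < Real.log y - Real.log x := by linarith
      have hd0 : 0 < Real.log y - Real.log x := lt_trans (by positivity) hden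
      rw [lm_eq_of_lt hx0 hlt, div_lt_iff₀ hd0]
      have : ε * (1/ε) < ε * (Real.log y - Real.log x) := by
        exact (mul_lt_mul_iff_right₀ hε).2 hden
      rw [mul_one_div, div_self hε.ne'] at this
      linarith
  · rw [lm_self hx]
    exact lt_of_lt_of_le h (min_le_left _ _)
  · calc lm x y ≤ max x y := lm_le_max hx hy
      _ = x := max_eq_left hgt.le
      _ < ε := lt_of_lt_of_le h (min_le_left _ _)

lemma lm_eq_of_pos_ne {x y : ℝ} (hx : 0 < x) (hy : 0 < y) (hxy : x ≠ y) :
    lm x y = (x - y) / (Real.log x - Real.log y) := by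
  unfold lm
  rw [if_neg (fun h => hxy h.1), if_neg (not_le.2 (lt_min hx hy))]

open Filter Topology in
lemma lm_tendsto_zero_left {b : ℝ} :
    Filter.Tendsto (fun p : ℝ × ℝ => lm p.1 p.2)
      (nhdsWithin (0, b) (Set.Icc (0:ℝ) 1 ×ˢ Set.Icc (0:ℝ) 1)) (nhds 0) := by
  rw [Metric.tendsto_nhds]
  intro ε hε
  have hδ : (0:ℝ) < min ε (ε * Real.exp (-(1/ε))) := lt_min hε (by positivity)
  have h1 : ∀ᶠ p : ℝ × ℝ in nhdsWithin (0, b) (Set.Icc (0:ℝ) 1 ×ˢ Set.Icc (0:ℝ) 1),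
      p.1 < min ε (ε * Real.exp (-(1/ε))) :=
    ((continuous_fst.tendsto ((0:ℝ), b)).mono_left nhdsWithin_le_nhds).eventually
      (gt_mem_nhds hδ)
  filter_upwards [h1, self_mem_nhdsWithin] with p hp hpS
  simp only [Set.mem_prod, Set.mem_Icc] at hpS
  rw [Real.dist_eq, sub_zero, abs_of_nonneg (lm_nonneg hpS.1.1 hpS.2.1)]
  exact lm_small hpS.1.1 hpS.2.1 hpS.2.2 hε hp

open Filter Topology in
lemma lm_tendsto_zero_right {a : ℝ} :
    Filter.Tendsto (fun p : ℝ × ℝ => lm p.1 p.2)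
      (nhdsWithin (a, 0) (Set.Icc (0:ℝ) 1 ×ˢ Set.Icc (0:ℝ) 1)) (nhds 0) := by
  rw [Metric.tendsto_nhds]
  intro ε hε
  have hδ : (0:ℝ) < min ε (ε * Real.exp (-(1/ε))) := lt_min hε (by positivity)
  have h1 : ∀ᶠ p : ℝ × ℝ in nhdsWithin (a, 0) (Set.Icc (0:ℝ) 1 ×ˢ Set.Icc (0:ℝ) 1),
      p.2 < min ε (ε * Real.exp (-(1/ε))) :=
    ((continuous_snd.tendsto (a, (0:ℝ))).mono_left nhdsWithin_le_nhds).eventually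
      (gt_mem_nhds hδ)
  filter_upwards [h1, self_mem_nhdsWithin] with p hp hpS
  simp only [Set.mem_prod, Set.mem_Icc] at hpS
  rw [Real.dist_eq, sub_zero, abs_of_nonneg (lm_nonneg hpS.1.1 hpS.2.1), lm_comm_s9]
  exact lm_small hpS.2.1 hpS.1.1 hpS.1.2 hε hp

open Filter Topology in
lemma lm_continuousOn :
    ContinuousOn (fun p : ℝ × ℝ => lm p.1 p.2) (Set.Icc (0:ℝ) 1 ×ˢ Set.Icc (0:ℝ) 1) := by
  rintro ⟨a, b⟩ hq
  simp only [Set.mem_prod, Set.mem_Icc] at hq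
  obtain ⟨⟨ha0, ha1⟩, hb0, hb1⟩ := hq
  rcases eq_or_lt_of_le ha0 with ha | ha
  · -- a = 0
    unfold ContinuousWithinAt
    have h0 : lm a b = 0 := lm_of_nonpos (by rw [← ha]; exact min_le_left 0 b)
    rw [show (fun p : ℝ × ℝ => lm p.1 p.2) (a, b) = 0 from h0, ← ha]
    exact lm_tendsto_zero_left
  rcases eq_or_lt_of_le hb0 with hb | hb
  · -- b = 0
    unfold ContinuousWithinAt
    have h0 : lm a b = 0 := lm_of_nonpos (by rw [← hb]; exact min_le_right a 0)
    rw [show (fun p : ℝ × ℝ => lm p.1 p.2) (a, b) = 0 from h0, ← hb]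
    exact lm_tendsto_zero_right
  rcases eq_or_ne a b with rfl | hab
  · -- squeeze at (a, a)
    have hopen : IsOpen {p : ℝ × ℝ | 0 < p.1 ∧ 0 < p.2} :=
      (isOpen_lt continuous_const continuous_fst).inter
        (isOpen_lt continuous_const continuous_snd)
    have hev : ∀ᶠ p : ℝ × ℝ in
        nhdsWithin (a, a) (Set.Icc (0:ℝ) 1 ×ˢ Set.Icc (0:ℝ) 1), 0 < p.1 ∧ 0 < p.2 :=
      Filter.Eventually.filter_mono nhdsWithin_le_nhds
        ((hopen.mem_nhds ⟨ha, ha⟩) : _)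
    unfold ContinuousWithinAt
    rw [show (fun p : ℝ × ℝ => lm p.1 p.2) (a, a) = a from lm_self ha0]
    have tmin : Filter.Tendsto (fun p : ℝ × ℝ => min p.1 p.2)
        (nhdsWithin (a, a) (Set.Icc (0:ℝ) 1 ×ˢ Set.Icc (0:ℝ) 1)) (nhds a) := by
      have := ((continuous_fst.min continuous_snd).tendsto ((a : ℝ), (a : ℝ))).mono_left
        (nhdsWithin_le_nhds : nhdsWithin ((a:ℝ),(a:ℝ)) (Set.Icc (0:ℝ) 1 ×ˢ Set.Icc (0:ℝ) 1) ≤ _)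
      simpa using this
    have tmax : Filter.Tendsto (fun p : ℝ × ℝ => max p.1 p.2)
        (nhdsWithin (a, a) (Set.Icc (0:ℝ) 1 ×ˢ Set.Icc (0:ℝ) 1)) (nhds a) := by
      have := ((continuous_fst.max continuous_snd).tendsto ((a : ℝ), (a : ℝ))).mono_left
        (nhdsWithin_le_nhds : nhdsWithin ((a:ℝ),(a:ℝ)) (Set.Icc (0:ℝ) 1 ×ˢ Set.Icc (0:ℝ) 1) ≤ _)
      simpa using this
    exact tendsto_of_tendsto_of_tendsto_of_le_of_le' tmin tmax
      (hev.mono fun p hp => min_le_lm_s9 hp.1 hp.2)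
      (hev.mono fun p hp => lm_le_max hp.1.le hp.2.le)
  · -- locally equal to a continuous function
    have hopen : IsOpen {p : ℝ × ℝ | 0 < p.1 ∧ 0 < p.2 ∧ p.1 ≠ p.2} :=
      (isOpen_lt continuous_const continuous_fst).inter
        ((isOpen_lt continuous_const continuous_snd).inter
          (isOpen_ne_fun continuous_fst continuous_snd))
    have hct : ContinuousAt (fun p : ℝ × ℝ =>
        (p.1 - p.2) / (Real.log p.1 - Real.log p.2)) (a, b) := by
      apply ContinuousAt.div
      · exact (continuous_fst.sub continuous_snd).continuousAt
      · exact ((Real.continuousAt_log ha.ne').comp continuousAt_fst).sub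
          ((Real.continuousAt_log hb.ne').comp (x := (a, b)) continuousAt_snd)
      · exact sub_ne_zero.2 fun h =>
          hab (Real.log_injOn_pos (Set.mem_Ioi.2 ha) (Set.mem_Ioi.2 hb) h)
    have heq : (fun p : ℝ × ℝ => (p.1 - p.2) / (Real.log p.1 - Real.log p.2))
        =ᶠ[nhds ((a:ℝ), (b:ℝ))] fun p : ℝ × ℝ => lm p.1 p.2 := by
      filter_upwards [hopen.mem_nhds ⟨ha, hb, hab⟩] with p hp
      exact (lm_eq_of_pos_ne hp.1 hp.2.1 hp.2.2).symm
    exact (hct.congr heq).continuousWithinAt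

/-- Range and vanishing set of `φ(a,b) = lm(a,b) + lm(1-a,1-b)` on the unit square:
`φ` is continuous on `[0,1]²`, takes values in `[0,1]`, and vanishes exactly at
`(0,1)` and `(1,0)`. -/
theorem lm_sum_continuous_range_zero_set :
    ContinuousOn (fun p : ℝ × ℝ => lm p.1 p.2 + lm (1 - p.1) (1 - p.2))
      (Set.Icc (0:ℝ) 1 ×ˢ Set.Icc (0:ℝ) 1) ∧
    (∀ a b : ℝ, a ∈ Set.Icc (0:ℝ) 1 → b ∈ Set.Icc (0:ℝ) 1 →
      0 ≤ lm a b + lm (1 - a) (1 - b) ∧ lm a b + lm (1 - a) (1 - b) ≤ 1) ∧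
    (∀ a b : ℝ, a ∈ Set.Icc (0:ℝ) 1 → b ∈ Set.Icc (0:ℝ) 1 →
      (lm a b + lm (1 - a) (1 - b) = 0 ↔ (a = 0 ∧ b = 1) ∨ (a = 1 ∧ b = 0))) := by
  refine ⟨?_, ?_, ?_⟩
  · have hg : ContinuousOn (fun p : ℝ × ℝ => ((1 - p.1, 1 - p.2) : ℝ × ℝ))
        (Set.Icc (0:ℝ) 1 ×ˢ Set.Icc (0:ℝ) 1) :=
      Continuous.continuousOn (by fun_prop)
    have hmaps : Set.MapsTo (fun p : ℝ × ℝ => ((1 - p.1, 1 - p.2) : ℝ × ℝ))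
        (Set.Icc (0:ℝ) 1 ×ˢ Set.Icc (0:ℝ) 1) (Set.Icc (0:ℝ) 1 ×ˢ Set.Icc (0:ℝ) 1) := by
      intro p hp
      simp only [Set.mem_prod, Set.mem_Icc] at *
      refine ⟨⟨by linarith [hp.1.2], by linarith [hp.1.1]⟩,
        by linarith [hp.2.2], by linarith [hp.2.1]⟩
    exact lm_continuousOn.add (lm_continuousOn.comp hg hmaps)
  · rintro a b ⟨ha0, ha1⟩ ⟨hb0, hb1⟩
    have n1 : 0 ≤ lm a b := lm_nonneg ha0 hb0
    have n2 : 0 ≤ lm (1 - a) (1 - b) := lm_nonneg (by linarith) (by linarith)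
    have u1 : lm a b ≤ (a + b) / 2 := lm_le_avg ha0 hb0
    have u2 : lm (1 - a) (1 - b) ≤ ((1 - a) + (1 - b)) / 2 :=
      lm_le_avg (by linarith) (by linarith)
    exact ⟨by linarith, by linarith⟩
  · rintro a b ⟨ha0, ha1⟩ ⟨hb0, hb1⟩
    have n1 : 0 ≤ lm a b := lm_nonneg ha0 hb0
    have n2 : 0 ≤ lm (1 - a) (1 - b) := lm_nonneg (by linarith) (by linarith)
    constructor
    · intro h
      have h1 : lm a b = 0 := by linarith
      have h2 : lm (1 - a) (1 - b) = 0 := by linarith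
      rw [lm_eq_zero_iff ha0 hb0] at h1
      rw [lm_eq_zero_iff (by linarith) (by linarith)] at h2
      rcases h1 with rfl | rfl <;> rcases h2 with h2 | h2
      · exact absurd h2 (by norm_num)
      · exact Or.inl ⟨rfl, by linarith⟩
      · exact Or.inr ⟨by linarith, rfl⟩
      · exact absurd h2 (by norm_num)
    · rintro (⟨rfl, rfl⟩ | ⟨rfl, rfl⟩) <;>
        simp [lm_of_nonpos (show min (0:ℝ) 1 ≤ 0 by norm_num),
          lm_of_nonpos (show min (1:ℝ) 0 ≤ 0 by norm_num)]
end
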